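/- Let N be a finitely generated nilpotent group that is not virtually abelian, i.e. N has no abelian subgroup of finite index. Then there exists an element g ∈ N such that the cyclic subgroup ⟨g⟩ (Subgroup.zpowers g) is not a virtual retract of N. -/

import Mathlib

/-- A subgroup `H` of `G` is a virtual retract of `G` if there is a finite-index subgroup
`K` of `G` containing `H` and a homomorphism `r : K →* H` restricting to the identity on `H`. -/
def IsVirtualRetract {G : Type*} [Group G] (H : Subgroup G) : Prop :=
  ∃ (K : Subgroup G) (hle : H ≤ K), K.FiniteIndex ∧
    ∃ r : K →* H, ∀ (x : G) (hx : x ∈ H), r ⟨x, hle hx⟩ = ⟨x, hx⟩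

open scoped commutatorElement

section Aux

variable {G : Type*} [Group G]

private lemma aux_pow_mul (a b : G) (hg : ∀ x : G, Commute ⁅a, b⁆ x) (k : ℕ) :
    a ^ k * b = ⁅a, b⁆ ^ k * b * a ^ k := by
  induction k with
  | zero => simp
  | succ k ih =>
    have hab : a * b = ⁅a, b⁆ * b * a := by
      simp only [commutatorElement_def]; group
    calc a ^ (k + 1) * b = a ^ k * (a * b) := by rw [pow_succ]; group
      _ = a ^ k * (⁅a, b⁆ * b * a) := by rw [hab]
      _ = a ^ k * ⁅a, b⁆ * b * a := by group
      _ = ⁅a, b⁆ * a ^ k * b * a := by rw [(hg (a ^ k)).eq]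
      _ = ⁅a, b⁆ * (a ^ k * b) * a := by group
      _ = ⁅a, b⁆ * (⁅a, b⁆ ^ k * b * a ^ k) * a := by rw [ih]
      _ = ⁅a, b⁆ ^ (k + 1) * b * a ^ (k + 1) := by
          rw [pow_succ' (⁅a, b⁆) k, pow_succ a k]; group

private lemma aux_pow_pow (a b : G) (hg : ∀ x : G, Commute ⁅a, b⁆ x) (n m : ℕ) :
    a ^ n * b ^ m = ⁅a, b⁆ ^ (n * m) * b ^ m * a ^ n := by
  induction m with
  | zero => simp
  | succ m ih =>
    calc a ^ n * b ^ (m + 1) = (a ^ n * b ^ m) * b := by rw [pow_succ]; group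
      _ = ⁅a, b⁆ ^ (n * m) * b ^ m * (a ^ n * b) := by rw [ih]; group
      _ = ⁅a, b⁆ ^ (n * m) * b ^ m * (⁅a, b⁆ ^ n * b * a ^ n) := by rw [aux_pow_mul a b hg n]
      _ = ⁅a, b⁆ ^ (n * m) * (b ^ m * ⁅a, b⁆ ^ n) * b * a ^ n := by group
      _ = ⁅a, b⁆ ^ (n * m) * (⁅a, b⁆ ^ n * b ^ m) * b * a ^ n := by
          rw [((hg (b ^ m)).pow_left n).eq]
      _ = ⁅a, b⁆ ^ (n * (m + 1)) * b ^ (m + 1) * a ^ n := by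
          rw [Nat.mul_succ, pow_add, pow_succ]; group

lemma commutator_pow_pow (a b : G) (hg : ∀ x : G, Commute ⁅a, b⁆ x) (n m : ℕ) :
    ⁅a ^ n, b ^ m⁆ = ⁅a, b⁆ ^ (n * m) := by
  have h := aux_pow_pow a b hg n m
  rw [commutatorElement_def, h]
  group

/-- Key lemma: a central commutator of infinite order generates a cyclic subgroup
which is not a virtual retract. -/
lemma not_virtualRetract_of_central_commutator (a b : G)
    (hg : ∀ x : G, Commute ⁅a, b⁆ x) (ho : ¬ IsOfFinOrder ⁅a, b⁆) :
    ¬ IsVirtualRetract (Subgroup.zpowers ⁅a, b⁆) := by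
  set g := ⁅a, b⁆ with hgdef
  rintro ⟨K, hle, hKfin, r, hr⟩
  obtain ⟨n, hn0, -, han⟩ := K.exists_pow_mem_of_index_ne_zero hKfin.index_ne_zero a
  obtain ⟨m, hm0, -, hbm⟩ := K.exists_pow_mem_of_index_ne_zero hKfin.index_ne_zero b
  set p := n * m with hp
  have hap : a ^ p ∈ K := by rw [hp, pow_mul]; exact pow_mem han m
  have hbp : b ^ p ∈ K := by rw [hp, mul_comm, pow_mul]; exact pow_mem hbm n
  have hkey : ⁅a ^ p, b ^ p⁆ = g ^ (p * p) := commutator_pow_pow a b hg p p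
  have hmem : g ^ (p * p) ∈ Subgroup.zpowers g := pow_mem (Subgroup.mem_zpowers g) _
  have h1 : (⁅(⟨a ^ p, hap⟩ : K), (⟨b ^ p, hbp⟩ : K)⁆ : K) = ⟨g ^ (p * p), hle hmem⟩ := by
    ext
    simpa only [commutatorElement_def, Subgroup.coe_mul, Subgroup.coe_inv] using hkey
  have h2 : r ⟨g ^ (p * p), hle hmem⟩ = ⟨g ^ (p * p), hmem⟩ := hr _ hmem
  have h3 : r ⁅(⟨a ^ p, hap⟩ : K), (⟨b ^ p, hbp⟩ : K)⁆ = 1 := by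
    rw [map_commutatorElement]
    exact commutatorElement_eq_one_iff_commute.mpr (mul_comm' _ _)
  rw [h1, h2] at h3
  have hpow : g ^ (p * p) = 1 := by
    simpa [Subtype.ext_iff] using h3
  exact ho (isOfFinOrder_iff_pow_eq_one.mpr
    ⟨p * p, Nat.mul_pos (Nat.mul_pos hn0 hm0) (Nat.mul_pos hn0 hm0), hpow⟩)

private lemma finite_closure_finset (S : Finset G)
    (hc : ∀ s ∈ S, s ∈ Subgroup.center G) (ht : ∀ s ∈ S, IsOfFinOrder s) :
    ((Subgroup.closure (S : Set G) : Subgroup G) : Set G).Finite := by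
  classical
  induction S using Finset.induction_on with
  | empty => simp
  | @insert a S ha ih =>
    have hne : Subgroup.Normal (Subgroup.zpowers a) := by
      constructor
      intro x hx g
      have hxc : x ∈ Subgroup.center G :=
        Subgroup.zpowers_le.mpr (hc a (Finset.mem_insert_self a S)) hx
      have : g * x * g⁻¹ = x := by
        rw [Subgroup.mem_center_iff.mp hxc g]; group
      rwa [this]
    have heq : Subgroup.closure ((insert a S : Finset G) : Set G)
        = Subgroup.closure (S : Set G) ⊔ Subgroup.zpowers a := by
      rw [Finset.coe_insert, Set.insert_eq, Subgroup.closure_union, Subgroup.zpowers_eq_closure,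
        sup_comm]
    rw [heq, Subgroup.mul_normal]
    refine Set.Finite.mul ?_ ?_
    · exact ih (fun s hs => hc s (Finset.mem_insert_of_mem hs))
        (fun s hs => ht s (Finset.mem_insert_of_mem hs))
    · exact finite_zpowers.mpr (ht a (Finset.mem_insert_self a S))

/-- The commutator map with a fixed element, as a homomorphism, when all commutators
from the subgroup `A` are central. -/
private def commHom (A : Subgroup G)
    (hZ : ∀ a ∈ A, ∀ b ∈ A, ⁅a, b⁆ ∈ Subgroup.center G) (t : A) : A →* G where
  toFun a := ⁅(t : G), (a : G)⁆
  map_one' := by simp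
  map_mul' a b := by
    have key : ⁅(t : G), ((a : G) * (b : G))⁆
        = ⁅(t : G), (a : G)⁆ * ((a : G) * ⁅(t : G), (b : G)⁆ * (a : G)⁻¹) := by
      simp only [commutatorElement_def]; group
    have hcen : ⁅(t : G), (b : G)⁆ ∈ Subgroup.center G := hZ _ t.2 _ b.2
    have : (a : G) * ⁅(t : G), (b : G)⁆ * (a : G)⁻¹ = ⁅(t : G), (b : G)⁆ := by
      rw [Subgroup.mem_center_iff.mp hcen (a : G)]; group
    simp only [Subgroup.coe_mul, key, this]

end Aux

/-- If all central commutators in a finitely generated nilpotent group are torsion, then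
the group is virtually abelian. Induction on the nilpotency class. -/
lemma exists_abelian_finiteIndex : ∀ (n : ℕ) (G : Type u) [Group G] [Group.FG G]
    [Group.IsNilpotent G], Group.nilpotencyClass G ≤ n →
    (∀ a b : G, ⁅a, b⁆ ∈ Subgroup.center G → IsOfFinOrder ⁅a, b⁆) →
    ∃ A : Subgroup G, A.FiniteIndex ∧ ∀ x y : A, x * y = y * x := by
  intro n
  induction n with
  | zero =>
    intro G _ _ _ hcl _
    have hsub : Subsingleton G := nilpotencyClass_zero_iff_subsingleton.mp (Nat.le_zero.mp hcl)
    exact ⟨⊤, ⟨by simp [Subgroup.index_top]⟩, fun x y => Subsingleton.elim _ _⟩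
  | succ n ih =>
    intro G _ _ _ hcl hG
    classical
    set Z := Subgroup.center G with hZdef
    have hclQ : Group.nilpotencyClass (G ⧸ Z) ≤ n := by
      rw [nilpotencyClass_quotient_center]; omega
    -- central commutators in the quotient are torsion
    have hQ : ∀ x y : G ⧸ Z, ⁅x, y⁆ ∈ Subgroup.center (G ⧸ Z) → IsOfFinOrder ⁅x, y⁆ := by
      intro x y hcen
      obtain ⟨a, rfl⟩ := QuotientGroup.mk_surjective x
      obtain ⟨b, rfl⟩ := QuotientGroup.mk_surjective y
      set u := ⁅a, b⁆ with hudef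
      have hmku : ((u : G) : G ⧸ Z) = ⁅(a : G ⧸ Z), (b : G ⧸ Z)⁆ :=
        map_commutatorElement (QuotientGroup.mk' Z) a b
      have hcent : ∀ x : G, ⁅u, x⁆ ∈ Z := by
        intro v
        have h1 : ((⁅u, v⁆ : G) : G ⧸ Z) = 1 := by
          have : ((⁅u, v⁆ : G) : G ⧸ Z) = ⁅(u : G ⧸ Z), (v : G ⧸ Z)⁆ :=
            map_commutatorElement (QuotientGroup.mk' Z) u v
          rw [this]
          refine commutatorElement_eq_one_iff_commute.mpr ?_
          rw [hmku]
          exact (Subgroup.mem_center_iff.mp hcen ((v : G) : G ⧸ Z)).symm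
        exact (QuotientGroup.eq_one_iff _).mp h1
      obtain ⟨S, hSclosure, hSfin⟩ := Group.fg_iff.mp ‹Group.FG G›
      classical
      set T := hSfin.toFinset with hTdef
      set k := ∏ s ∈ T, orderOf ⁅u, s⁆ with hkdef
      have hk0 : 0 < k :=
        Finset.prod_pos (fun s _ => (hG u s (hcent s)).orderOf_pos)
      have hcomm : ∀ s ∈ T, Commute (u ^ k) s := by
        intro s hs
        have hc' : ∀ x : G, Commute ⁅u, s⁆ x := fun x =>
          (Subgroup.mem_center_iff.mp (hcent s) x).symm
        have h1 : ⁅u ^ k, s ^ 1⁆ = ⁅u, s⁆ ^ (k * 1) := commutator_pow_pow u s hc' k 1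
        have h2 : ⁅u, s⁆ ^ k = 1 :=
          orderOf_dvd_iff_pow_eq_one.mp (Finset.dvd_prod_of_mem _ hs)
        rw [pow_one, mul_one, h2] at h1
        exact commutatorElement_eq_one_iff_commute.mp h1
      have hukZ : u ^ k ∈ Z := by
        rw [hZdef, Subgroup.mem_center_iff]
        intro g
        have hgmem : g ∈ Subgroup.closure S := by rw [hSclosure]; exact Subgroup.mem_top g
        have : Commute (u ^ k) g := by
          refine Subgroup.closure_induction
            (fun x hx => hcomm x (by simpa [hTdef] using hx)) (Commute.one_right _)
            (fun x y _ _ hx hy => hx.mul_right hy)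
            (fun x _ hx => hx.inv_right) hgmem
        exact this.symm.eq
      refine isOfFinOrder_iff_pow_eq_one.mpr ⟨k, hk0, ?_⟩
      rw [← hmku, ← QuotientGroup.mk'_apply, ← map_pow]
      exact (QuotientGroup.eq_one_iff _).mpr hukZ
    obtain ⟨B, hBfin, hBcomm⟩ := ih (G ⧸ Z) hclQ hQ
    set A := B.comap (QuotientGroup.mk' Z) with hAdef
    have hAfin : A.FiniteIndex := by
      constructor
      rw [hAdef, Subgroup.index_comap_of_surjective _ (QuotientGroup.mk'_surjective Z)]
      exact hBfin.index_ne_zero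
    have hZA : ∀ a ∈ A, ∀ b ∈ A, ⁅a, b⁆ ∈ Z := by
      intro a ha b hb
      have hcomm := hBcomm ⟨QuotientGroup.mk' Z a, ha⟩ ⟨QuotientGroup.mk' Z b, hb⟩
      have hcomm' : (QuotientGroup.mk' Z) a * (QuotientGroup.mk' Z) b
          = (QuotientGroup.mk' Z) b * (QuotientGroup.mk' Z) a := by
        exact Subtype.ext_iff.mp hcomm
      have h1 : (QuotientGroup.mk' Z) ⁅a, b⁆ = 1 := by
        rw [map_commutatorElement]
        exact commutatorElement_eq_one_iff_commute.mpr hcomm'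
      exact (QuotientGroup.eq_one_iff _).mp h1
    haveI := hAfin
    haveI : Group.FG A := Subgroup.fg_of_index_ne_zero A
    obtain ⟨T, hT⟩ := Group.fg_def.mp ‹Group.FG A›
    -- commutator homomorphisms
    set f : A → Subgroup A := fun t => (commHom A hZA t).ker with hfdef
    have hker : ∀ t : A, ∀ a : A, a ∈ f t ↔ ⁅(t : G), (a : G)⁆ = 1 := by
      intro t a; rfl
    have hffin : ∀ t ∈ T, (f t).FiniteIndex := by
      intro t _
      constructor
      rw [hfdef, Subgroup.index_ker]
      have hrange : ((commHom A hZA t).range : Set G).Finite := by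
        have h1 : (commHom A hZA t).range = Subgroup.closure ((commHom A hZA t) '' (T : Set A)) := by
          rw [MonoidHom.range_eq_map, ← hT, MonoidHom.map_closure]
        rw [h1, ← Finset.coe_image]
        refine finite_closure_finset _ ?_ ?_
        · intro s hs
          simp only [Finset.mem_image] at hs
          obtain ⟨t', _, rfl⟩ := hs
          exact hZA _ t.2 _ t'.2
        · intro s hs
          simp only [Finset.mem_image] at hs
          obtain ⟨t', _, rfl⟩ := hs
          exact hG _ _ (hZA _ t.2 _ t'.2)
      haveI : Finite (commHom A hZA t).range := hrange.to_subtype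
      exact Nat.card_pos.ne'
    set C := ⨅ t ∈ T, f t with hCdef
    have hCfin : C.FiniteIndex := Subgroup.finiteIndex_iInf' f hffin
    -- elements of C commute with everything in A
    have hCcomm : ∀ c ∈ C, ∀ y : A, c * y = y * c := by
      intro c hc y
      have hct : ∀ t ∈ T, Commute t c := by
        intro t ht
        have : c ∈ f t := by
          rw [hCdef] at hc
          exact (Subgroup.mem_iInf.mp hc t |> Subgroup.mem_iInf.mp) ht
        have h1 : ⁅(t : G), (c : G)⁆ = 1 := (hker t c).mp this
        have h2 : Commute (t : G) (c : G) := commutatorElement_eq_one_iff_commute.mp h1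
        exact Subtype.ext h2.eq
      have hy : y ∈ Subgroup.closure (T : Set A) := by rw [hT]; exact Subgroup.mem_top y
      have : Commute c y := by
        refine Subgroup.closure_induction
          (fun x hx => (hct x hx).symm) (Commute.one_right _)
          (fun x y _ _ hx hy => hx.mul_right hy)
          (fun x _ hx => hx.inv_right) hy
      exact this.eq
    -- push C down to a subgroup of G
    refine ⟨C.map A.subtype, ?_, ?_⟩
    · constructor
      have hle : C.map A.subtype ≤ A := Subgroup.map_subtype_le C
      have heq : (C.map A.subtype).subgroupOf A = C := by
        rw [Subgroup.subgroupOf]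
        exact Subgroup.comap_map_eq_self_of_injective A.subtype_injective C
      have := Subgroup.relIndex_mul_index hle
      rw [Subgroup.relIndex, heq] at this
      rw [← this]
      exact Nat.mul_ne_zero hCfin.index_ne_zero hAfin.index_ne_zero
    · rintro ⟨x, hx⟩ ⟨y, hy⟩
      obtain ⟨x', hx', rfl⟩ := hx
      obtain ⟨y', hy', rfl⟩ := hy
      have := hCcomm x' hx' y'
      exact Subtype.ext (by simpa [Subtype.ext_iff] using this)

/-- A finitely generated nilpotent group that is not virtually abelian contains a cyclic
subgroup that is not a virtual retract. -/
theorem stmt_6 {N : Type*} [Group N] [Group.FG N] [Group.IsNilpotent N]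
    (h : ¬∃ A : Subgroup N, A.FiniteIndex ∧ ∀ a b : A, a * b = b * a) :
    ∃ g : N, ¬IsVirtualRetract (Subgroup.zpowers g) := by
  by_contra hcon
  push_neg at hcon
  have hG : ∀ a b : N, ⁅a, b⁆ ∈ Subgroup.center N → IsOfFinOrder ⁅a, b⁆ := by
    intro a b hz
    by_contra ho
    exact not_virtualRetract_of_central_commutator a b
      (fun x => (Subgroup.mem_center_iff.mp hz x).symm) ho (hcon ⁅a, b⁆)
  exact h (exists_abelian_finiteIndex (Group.nilpotencyClass N) N le_rfl hG)
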